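/- Weight-alternation structure of the change under edge insertion (the content of Lemmas 2–4 of the paper): let M be a stable b-matching of G, let e = {u,v} be an unordered pair of distinct vertices with e ∉ E, and let M̃ be a stable b-matching of the graph G + e. Then (i) every edge f ∈ M \ M̃ shares an endpoint with some edge g ∈ M̃ \ M satisfying f ≺ g, and (ii) every edge g ∈ M̃ \ M with g ≠ e shares an endpoint with some edge f ∈ M \ M̃ satisfying g ≺ f. -/
import Mathlib


/-!
Framework: finite simple graph `G` on vertex set `V`, positive edge weights `ω` on
unordered pairs of distinct vertices, capacities `b`, and a strict linear order
`prec` on unordered pairs of distinct vertices refining `ω`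
(the paper's tie-breaking rule).  `M` is a set of edges.
-/

variable {V : Type*} [Fintype V] [DecidableEq V]

/-- Number of edges of `M` incident to vertex `u`. -/
def bDeg (M : Finset (Sym2 V)) (u : V) : ℕ :=
  (M.filter (fun e => u ∈ e)).card

/-- `u` is saturated in `M`: it is incident to exactly `b u` edges of `M`. -/
def Saturated (b : V → ℕ) (M : Finset (Sym2 V)) (u : V) : Prop :=
  bDeg M u = b u

/-- `M` is a `b`-matching of `G`: a set of edges of `G` such that every vertex `u`
is incident to at most `b u` edges of `M`. -/
def IsBMatching (G : SimpleGraph V) (b : V → ℕ) (M : Finset (Sym2 V)) : Prop :=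
  (∀ e ∈ M, e ∈ G.edgeSet) ∧ ∀ u : V, bDeg M u ≤ b u

/-- `M` is a stable `b`-matching of `G` (termination condition of the b-suitor
algorithm): for every non-matching edge `e` of `G` there is an endpoint `x` of `e`
which is saturated and all of whose matched edges beat `e` in the order `prec`. -/
def IsStable (G : SimpleGraph V) (b : V → ℕ) (prec : Sym2 V → Sym2 V → Prop)
    (M : Finset (Sym2 V)) : Prop :=
  IsBMatching G b M ∧
    ∀ e ∈ G.edgeSet, e ∉ M →
      ∃ x ∈ e, Saturated b M x ∧ ∀ f ∈ M, x ∈ f → prec e f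

/-- Lemmas 2-4, insertion case: weight-alternation structure of the
change under edge insertion. -/
lemma exists_new_edge {V : Type*} [Fintype V] [DecidableEq V]
    (A B : Finset (Sym2 V)) (x : V) (f : Sym2 V)
    (hfA : f ∈ A) (hxf : x ∈ f) (hfB : f ∉ B)
    (hdeg : bDeg A x ≤ bDeg B x) :
    ∃ g ∈ B, x ∈ g ∧ g ∉ A := by
  by_contra h
  push_neg at h
  have hsub : B.filter (fun e => x ∈ e) ⊆
      (A.filter (fun e => x ∈ e)).erase f := by
    intro g hg
    simp only [Finset.mem_filter] at hg
    have hgA := h g hg.1 hg.2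
    refine Finset.mem_erase.2 ⟨?_, Finset.mem_filter.2 ⟨hgA, hg.2⟩⟩
    rintro rfl; exact hfB hg.1
  have hcard := Finset.card_le_card hsub
  have hfin : f ∈ A.filter (fun e => x ∈ e) := Finset.mem_filter.2 ⟨hfA, hxf⟩
  have := Finset.card_erase_lt_of_mem hfin
  unfold bDeg at hdeg
  omega

theorem insertion_alternation
    (G : SimpleGraph V) (ω : Sym2 V → ℝ) (b : V → ℕ)
    (prec : Sym2 V → Sym2 V → Prop)
    (hω : ∀ e : Sym2 V, ¬ e.IsDiag → 0 < ω e)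
    (hirr : ∀ e : Sym2 V, ¬ prec e e)
    (htrans : ∀ e f g : Sym2 V, prec e f → prec f g → prec e g)
    (htotal : ∀ e f : Sym2 V, ¬ e.IsDiag → ¬ f.IsDiag → e ≠ f → prec e f ∨ prec f e)
    (href : ∀ e f : Sym2 V, ¬ e.IsDiag → ¬ f.IsDiag → ω e < ω f → prec e f)
    (u v : V) (huv : u ≠ v) (hnotE : s(u, v) ∉ G.edgeSet)
    (M : Finset (Sym2 V)) (hM : IsStable G b prec M)
    (Mt : Finset (Sym2 V))
    (hMt : IsStable (G ⊔ SimpleGraph.fromEdgeSet {s(u, v)}) b prec Mt) :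
    (∀ f ∈ M \ Mt, ∃ g ∈ Mt \ M, (∃ x, x ∈ f ∧ x ∈ g) ∧ prec f g) ∧
      (∀ g ∈ Mt \ M, g ≠ s(u, v) →
        ∃ f ∈ M \ Mt, (∃ x, x ∈ g ∧ x ∈ f) ∧ prec g f) := by
  obtain ⟨⟨hMsub, hMdeg⟩, hMstab⟩ := hM
  obtain ⟨⟨hMtsub, hMtdeg⟩, hMtstab⟩ := hMt
  constructor
  · intro f hf
    rw [Finset.mem_sdiff] at hf
    obtain ⟨hfM, hfMt⟩ := hf
    have hfE : f ∈ (G ⊔ SimpleGraph.fromEdgeSet {s(u, v)}).edgeSet := by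
      rw [SimpleGraph.edgeSet_sup]; exact Or.inl (hMsub f hfM)
    obtain ⟨x, hxf, hsat, hall⟩ := hMtstab f hfE hfMt
    have hdeg : bDeg M x ≤ bDeg Mt x := by
      rw [hsat]; exact hMdeg x
    obtain ⟨g, hgMt, hxg, hgM⟩ := exists_new_edge M Mt x f hfM hxf hfMt hdeg
    exact ⟨g, Finset.mem_sdiff.2 ⟨hgMt, hgM⟩, ⟨x, hxf, hxg⟩, hall g hgMt hxg⟩
  · intro g hg hgne
    rw [Finset.mem_sdiff] at hg
    obtain ⟨hgMt, hgM⟩ := hg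
    have hgE : g ∈ G.edgeSet := by
      have := hMtsub g hgMt
      rw [SimpleGraph.edgeSet_sup] at this
      rcases this with h | h
      · exact h
      · exfalso
        rw [SimpleGraph.edgeSet_fromEdgeSet] at h
        exact hgne (by simpa using h.1)
    obtain ⟨x, hxg, hsat, hall⟩ := hMstab g hgE hgM
    have hdeg : bDeg Mt x ≤ bDeg M x := by
      rw [hsat]; exact hMtdeg x
    obtain ⟨f, hfM, hxf, hfMt⟩ := exists_new_edge Mt M x g hgMt hxg hgM hdeg
    exact ⟨f, Finset.mem_sdiff.2 ⟨hfM, hfMt⟩, ⟨x, hxg, hxf⟩, hall f hfM hxf⟩
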